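/- (Theorem 1, minimum required backhaul rate in Regime C, exponent form.) Let β, γ be real numbers with β ∈ (0,1), γ ∈ [0,1), β + 2γ ≥ 1, and 2γ ≤ β² − 3β + 2, and let η ∈ ℝ. Then E(α,β,γ,η) = E∞(α,β,γ) holds for every α > 2 if and only if η ≥ (1−β)/2. That is, the minimum backhaul-rate exponent required to achieve the infinite-backhaul throughput scaling exponent in Regime C is exactly (1−β)/2 (each backhaul link must support rate Ω((n/m)^{1/2})). -/

import Mathlib

/-- Throughput scaling exponent of the infrastructure-supported single-hop (ISH) protocol. -/
noncomputable def eISH (α β γ : ℝ) : ℝ := 1 + γ - α * (1 - β) / 2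

/-- Throughput scaling exponent of the infrastructure-supported multihop (IMH) protocol. -/
noncomputable def eIMH (β γ : ℝ) : ℝ := min (β + γ) ((1 + β) / 2)

/-- Achievable throughput scaling exponent with backhaul-rate exponent `η`. -/
noncomputable def Eexp (α β γ η : ℝ) : ℝ :=
  max (min (max (eISH α β γ) (eIMH β γ)) (β + η)) (max (1 / 2) (2 - α / 2))

/-- Achievable throughput scaling exponent with infinite-capacity backhaul. -/
noncomputable def Einf (α β γ : ℝ) : ℝ :=
  max (max (eISH α β γ) (eIMH β γ)) (max (1 / 2) (2 - α / 2))

/-- Theorem 1, Regime C: the minimum backhaul-rate exponent required to achieve the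
infinite-backhaul throughput scaling exponent is exactly `(1 - β) / 2`. -/
theorem minimum_backhaul_rate_regimeC (β γ η : ℝ)
    (hβ : β ∈ Set.Ioo (0 : ℝ) 1) (hγ : γ ∈ Set.Ico (0 : ℝ) 1)
    (h1 : 1 ≤ β + 2 * γ) (h2 : 2 * γ ≤ β ^ 2 - 3 * β + 2) :
    (∀ α : ℝ, 2 < α → Eexp α β γ η = Einf α β γ) ↔ (1 - β) / 2 ≤ η := by
  obtain ⟨hb0, hb1⟩ := hβ
  obtain ⟨hg0, hg1⟩ := hγ
  have hIMH : eIMH β γ = (1 + β) / 2 := by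
    unfold eIMH; exact min_eq_right (by linarith)
  constructor
  · intro h
    have h4 := h 4 (by norm_num)
    by_contra hη
    push_neg at hη
    have hle1 : Eexp 4 β γ η ≤ max (β + η) (max (1 / 2 : ℝ) (2 - 4 / 2)) := by
      unfold Eexp
      exact max_le_max (min_le_right _ _) le_rfl
    have hge : (1 + β) / 2 ≤ Einf 4 β γ := by
      unfold Einf
      exact le_max_of_le_left (le_max_of_le_right (le_of_eq hIMH.symm))
    have hlt : max (β + η) (max (1 / 2 : ℝ) (2 - 4 / 2)) < (1 + β) / 2 := by
      apply max_lt (by linarith)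
      apply max_lt (by linarith) (by norm_num; linarith)
    linarith
  · intro hη α hα
    have h1β : (0 : ℝ) < 1 - β := by linarith
    by_cases hc : eISH α β γ ≤ (1 + β) / 2
    · unfold Eexp Einf
      rw [hIMH, max_eq_right hc, min_eq_left (by linarith)]
    · push_neg at hc
      have hc' : (α - 1) * (1 - β) / 2 < γ := by
        unfold eISH at hc; linarith
      have hαlt : α < 3 - β := by
        have hmul : α * (1 - β) < (3 - β) * (1 - β) := by nlinarith
        exact lt_of_mul_lt_mul_right hmul h1β.le
      have hK : eISH α β γ ≤ 2 - α / 2 := by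
        unfold eISH
        nlinarith [mul_lt_mul_of_pos_left hαlt hb0]
      have hK2 : (1 + β) / 2 ≤ 2 - α / 2 := by linarith
      unfold Eexp Einf
      rw [hIMH]
      have hM : max (eISH α β γ) ((1 + β) / 2) ≤ max (1 / 2 : ℝ) (2 - α / 2) :=
        le_trans (max_le hK hK2) (le_max_right _ _)
      rw [max_eq_right (le_trans (min_le_left _ _) hM), max_eq_right hM]
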